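/- Let α > 0, let f ∈ L¹[−π,π] with f ≥ 0, let b ∈ (−π,0) ∪ (0,π), let f_H be the polarization of f with respect to b, and let u_f and u_{f_H} be the solutions of the Robin problem with heat sources f and f_H respectively. Then for every convex increasing function φ : ℝ → ℝ, ∫_{−π}^{π} φ(u_f(x)) dx ≤ ∫_{−π}^{π} φ(u_{f_H}(x)) dx. -/

import Mathlib

open MeasureTheory Real Set intervalIntegral

/-- The constant `c_α = α/(1+απ)`. -/
noncomputable def cA (α : ℝ) : ℝ := α / (1 + α * π)

/-- The Green's function of the Robin problem on `[-π, π]`. -/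
noncomputable def robinGreen (α x y : ℝ) : ℝ :=
  -(1/2) * cA α * x * y - (1/2) * |x - y| + 1 / (2 * cA α)

/-- The solution of the Robin problem with heat source `f`. -/
noncomputable def robinSol (α : ℝ) (f : ℝ → ℝ) (x : ℝ) : ℝ :=
  ∫ y in (-π)..π, robinGreen α x y * f y

/-- The polarization (towards zero) of `f : [-π,π] → ℝ` with respect to `b`. -/
noncomputable def polar (b : ℝ) (f : ℝ → ℝ) (x : ℝ) : ℝ :=
  if 0 < b then
    if x < 2 * b - π then f x
    else if x ≤ b then max (f x) (f (2 * b - x))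
    else min (f x) (f (2 * b - x))
  else
    if x ≤ b then min (f x) (f (2 * b - x))
    else if x ≤ 2 * b + π then max (f x) (f (2 * b - x))
    else f x

lemma cA_pos {α : ℝ} (hα : 0 < α) : 0 < cA α := by
  have := pi_pos
  exact div_pos hα (by nlinarith)

lemma cA_pi_lt_one {α : ℝ} (hα : 0 < α) : cA α * π < 1 := by
  have hπ := pi_pos
  rw [cA, div_mul_eq_mul_div, div_lt_one (by nlinarith)]
  nlinarith

lemma green_symm (α x y : ℝ) : robinGreen α x y = robinGreen α y x := by
  simp only [robinGreen, abs_sub_comm x y]; ring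

lemma green_reflect2 (α b x y : ℝ) :
    robinGreen α x y - robinGreen α (2*b-x) (2*b-y) = cA α * b * (2*b-x-y) := by
  have h : |2*b-x-(2*b-y)| = |x - y| := by rw [show 2*b-x-(2*b-y) = -(x-y) by ring, abs_neg]
  simp only [robinGreen, h]; ring

lemma green_reflect3 (α b x y : ℝ) :
    robinGreen α x (2*b-y) - robinGreen α (2*b-x) y = cA α * b * (y - x) := by
  have h : |x-(2*b-y)| = |2*b-x-y| := by rw [show x-(2*b-y) = -(2*b-x-y) by ring, abs_neg]
  simp only [robinGreen, h]; ring

lemma green_neg (α x y : ℝ) : robinGreen α (-x) (-y) = robinGreen α x y := by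
  have h : |-x - -y| = |x - y| := by rw [show -x - -y = -(x-y) by ring, abs_neg]
  simp only [robinGreen, h]; ring

lemma green_mono {α : ℝ} (hα : 0 < α) {b x y : ℝ} (hb : 0 < b) (hbπ : b < π)
    (hx : x ∈ Icc (2*b-π) b) (hy : y ∈ Icc (-π) b) :
    robinGreen α (2*b-x) y ≤ robinGreen α x y := by
  obtain ⟨hx1, hx2⟩ := hx
  obtain ⟨hy1, hy2⟩ := hy
  have hc := cA_pos hα
  have hcπ := cA_pi_lt_one hα
  have hπ := pi_pos
  rcases le_total y x with h | h
  · have h1 : |x - y| = x - y := abs_of_nonneg (by linarith)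
    have h2 : |2*b-x-y| = 2*b-x-y := abs_of_nonneg (by linarith)
    rw [robinGreen, robinGreen, h1, h2]
    have hcy : -(cA α * π) ≤ cA α * y := by nlinarith
    nlinarith [mul_nonneg (sub_nonneg.2 hx2) (sub_nonneg.2 hcy)]
  · have h1 : |x - y| = y - x := by rw [abs_sub_comm]; exact abs_of_nonneg (by linarith)
    have h2 : |2*b-x-y| = 2*b-x-y := abs_of_nonneg (by linarith)
    rw [robinGreen, robinGreen, h1, h2]
    rcases le_total 0 y with hy0 | hy0
    · nlinarith [mul_nonneg (mul_nonneg hc.le hy0) (sub_nonneg.2 hx2)]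
    · nlinarith [mul_nonneg (mul_nonneg hc.le (neg_nonneg.2 hy0))
        (by linarith : (0:ℝ) ≤ (π - b) - (b - x)),
        mul_nonneg (neg_nonneg.2 hy0) (sub_nonneg.2 hcπ.le)]

lemma two_point {φ : ℝ → ℝ} (hconv : ConvexOn ℝ univ φ) (hmono : Monotone φ)
    {A B A' B' : ℝ} (h1 : A ≤ A') (h2 : B ≤ A') (h3 : A + B ≤ A' + B') :
    φ A + φ B ≤ φ A' + φ B' := by
  set s := A + B - A' with hs
  have hsB' : s ≤ B' := by linarith
  have hsA : s ≤ A := by linarith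
  have hsB : s ≤ B := by linarith
  have key : φ A + φ B ≤ φ A' + φ s := by
    rcases eq_or_lt_of_le (hsA.trans h1) with heq | hlt
    · have hA : A = s := le_antisymm (heq ▸ h1) hsA
      have hB : B = s := le_antisymm (heq ▸ h2) hsB
      rw [hA, hB, ← heq]
    · set t := (A - s)/(A' - s) with htdef
      have hne : A' - s ≠ 0 := sub_ne_zero.2 hlt.ne'
      have htmul : t * (A' - s) = A - s := div_mul_cancel₀ _ hne
      have ht0 : 0 ≤ t := div_nonneg (by linarith) (by linarith)
      have ht1 : t ≤ 1 := (div_le_one (by linarith)).2 (by linarith)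
      have hA : A = t * A' + (1-t) * s := by linear_combination -htmul
      have hB : B = (1-t) * A' + t * s := by linear_combination htmul - hs
      have c1 : φ (t*A'+(1-t)*s) ≤ t * φ A' + (1-t) * φ s := by
        simpa using hconv.2 (mem_univ A') (mem_univ s) ht0 (by linarith : (0:ℝ) ≤ 1-t) (by ring)
      have c2 : φ ((1-t)*A'+t*s) ≤ (1-t) * φ A' + t * φ s := by
        simpa using hconv.2 (mem_univ A') (mem_univ s) (by linarith : (0:ℝ) ≤ 1-t) ht0 (by ring)
      rw [← hA] at c1
      rw [← hB] at c2
      linarith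
  have := hmono hsB'
  linarith

lemma point1 {α b x y p q : ℝ} (hα : 0 < α) (hb : 0 < b) (hbπ : b < π)
    (hx : x ∈ Icc (-π) b) (hy : y ∈ Icc (2*b-π) b) (hp : 0 ≤ p) (hq : 0 ≤ q) :
    robinGreen α x y * p + robinGreen α x (2*b-y) * q ≤
      robinGreen α x y * max p q + robinGreen α x (2*b-y) * min p q := by
  have hkey : robinGreen α x (2*b-y) ≤ robinGreen α x y := by
    calc robinGreen α x (2*b-y) = robinGreen α (2*b-y) x := green_symm ..
      _ ≤ robinGreen α y x := green_mono hα hb hbπ hy hx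
      _ = robinGreen α x y := (green_symm ..).symm
  rcases le_total p q with h | h
  · rw [max_eq_right h, min_eq_left h]
    nlinarith [mul_nonneg (sub_nonneg.2 h) (sub_nonneg.2 hkey)]
  · rw [max_eq_left h, min_eq_right h]

lemma point2 {α b x y p q : ℝ} (hα : 0 < α) (hb : 0 < b) (hbπ : b < π)
    (hx : x ∈ Icc (2*b-π) b) (hy : y ∈ Icc (2*b-π) b) (hp : 0 ≤ p) (hq : 0 ≤ q) :
    robinGreen α (2*b-x) y * p + robinGreen α (2*b-x) (2*b-y) * q ≤
      robinGreen α x y * max p q + robinGreen α x (2*b-y) * min p q := by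
  have hπ := pi_pos
  have hc := cA_pos hα
  have hy' : y ∈ Icc (-π) b := ⟨by linarith [hy.1], hy.2⟩
  have hΔ : robinGreen α (2*b-x) y ≤ robinGreen α x y := green_mono hα hb hbπ hx hy'
  have h2 := green_reflect2 α b x y
  have h3 := green_reflect3 α b x y
  rcases le_total p q with h | h
  · rw [max_eq_right h, min_eq_left h]
    have e2q : robinGreen α x y * q - robinGreen α (2*b-x) (2*b-y) * q
        = cA α * b * (2*b-x-y) * q := by linear_combination q * h2
    have e3p : robinGreen α x (2*b-y) * p - robinGreen α (2*b-x) y * p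
        = cA α * b * (y-x) * p := by linear_combination p * h3
    have prodfact : 0 ≤ cA α * b * (2*b-x-y) * q + cA α * b * (y-x) * p := by
      nlinarith [mul_nonneg (mul_nonneg hc.le hb.le)
          (mul_nonneg (add_nonneg hp hq) (sub_nonneg.2 hx.2)),
        mul_nonneg (mul_nonneg hc.le hb.le)
          (mul_nonneg (sub_nonneg.2 h) (sub_nonneg.2 hy.2))]
    linarith
  · rw [max_eq_left h, min_eq_right h]
    have eΔpq : 0 ≤ (p - q) * (robinGreen α x y - robinGreen α (2*b-x) y) :=
      mul_nonneg (sub_nonneg.2 h) (sub_nonneg.2 hΔ)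
    have esumq : robinGreen α x y * q - robinGreen α (2*b-x) y * q
        + robinGreen α x (2*b-y) * q - robinGreen α (2*b-x) (2*b-y) * q
        = cA α * b * (2*b-2*x) * q := by linear_combination q * h2 + q * h3
    have hcb2 : 0 ≤ cA α * b * (2*b-2*x) * q :=
      mul_nonneg (mul_nonneg (mul_nonneg hc.le hb.le) (by linarith [hx.2])) hq
    nlinarith [eΔpq, esumq, hcb2]

lemma point3 {α b x y p q : ℝ} (hα : 0 < α) (hb : 0 < b)
    (hy : y ∈ Icc (2*b-π) b) (hp : 0 ≤ p) (hq : 0 ≤ q) :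
    robinGreen α x y * p + robinGreen α x (2*b-y) * q
      + robinGreen α (2*b-x) y * p + robinGreen α (2*b-x) (2*b-y) * q ≤
    robinGreen α x y * max p q + robinGreen α x (2*b-y) * min p q
      + robinGreen α (2*b-x) y * max p q + robinGreen α (2*b-x) (2*b-y) * min p q := by
  have hc := cA_pos hα
  have h2 := green_reflect2 α b x y
  have h3 := green_reflect3 α b x y
  rcases le_total p q with h | h
  · rw [max_eq_right h, min_eq_left h]
    have key : (q-p) * (robinGreen α x y + robinGreen α (2*b-x) y
        - robinGreen α x (2*b-y) - robinGreen α (2*b-x) (2*b-y))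
        = cA α * b * (2*b-2*y) * (q-p) := by
      linear_combination (q-p) * h2 - (q-p) * h3
    have hpos : 0 ≤ cA α * b * (2*b-2*y) * (q-p) :=
      mul_nonneg (mul_nonneg (mul_nonneg hc.le hb.le) (by linarith [hy.2])) (sub_nonneg.2 h)
    nlinarith [key, hpos]
  · rw [max_eq_left h, min_eq_right h]

lemma uIcc_subset_Icc' {a b c d : ℝ} (h : a ≤ b) (h1 : c ∈ Icc a b) (h2 : d ∈ Icc a b) :
    uIcc c d ⊆ Icc a b := by
  rw [← uIcc_of_le h]
  exact uIcc_subset_uIcc (by rwa [uIcc_of_le h]) (by rwa [uIcc_of_le h])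

lemma green_cont (α x : ℝ) : Continuous fun y => robinGreen α x y := by
  unfold robinGreen
  continuity

lemma contMulII {k g : ℝ → ℝ} {s t : ℝ} (hk : Continuous k)
    (hg : IntervalIntegrable g volume s t) :
    IntervalIntegrable (fun y => k y * g y) volume s t := by
  obtain ⟨C, hC⟩ := (isCompact_uIcc (a := s) (b := t)).exists_bound_of_continuousOn
    hk.continuousOn
  rw [intervalIntegrable_iff] at hg ⊢
  refine Integrable.bdd_mul hg (c := C) (hk.aestronglyMeasurable.restrict) ?_
  filter_upwards [ae_restrict_mem measurableSet_uIoc] with y hy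
  exact hC y (uIoc_subset_uIcc hy)

lemma robinSol_continuous {α : ℝ} (hα : 0 < α) {g : ℝ → ℝ}
    (hg : IntervalIntegrable g volume (-π) π) : Continuous (robinSol α g) := by
  have hπ := pi_pos
  have hsub : uIcc (-π) π ⊆ Icc (-π) π := by rw [uIcc_of_le (by linarith)]
  set I := ∫ y in (-π)..π, |g y| with hI
  have hI0 : 0 ≤ I := integral_nonneg (by linarith) (fun y _ => abs_nonneg _)
  set L := (cA α * π + 1)/2 * I with hL
  have hL0 : 0 ≤ L := by
    have := cA_pos hα
    apply mul_nonneg _ hI0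
    nlinarith [mul_pos (cA_pos hα) hπ]
  have key : ∀ x x', dist (robinSol α g x) (robinSol α g x') ≤ L * dist x x' := by
    intro x x'
    rw [Real.dist_eq, Real.dist_eq]
    have h1 : IntervalIntegrable (fun y => robinGreen α x y * g y) volume (-π) π :=
      contMulII (green_cont α x) hg
    have h2 : IntervalIntegrable (fun y => robinGreen α x' y * g y) volume (-π) π :=
      contMulII (green_cont α x') hg
    have e : robinSol α g x - robinSol α g x'
        = ∫ y in (-π)..π, (robinGreen α x y - robinGreen α x' y) * g y := by
      rw [robinSol, robinSol, ← integral_sub h1 h2]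
      congr 1; funext y; ring
    have hbI : IntervalIntegrable (fun y => ((cA α * π + 1)/2 * |x - x'|) * |g y|)
        volume (-π) π := (hg.abs.const_mul _)
    have hbd : ∀ᵐ t ∂(volume.restrict (uIoc (-π) π)),
        ‖(robinGreen α x t - robinGreen α x' t) * g t‖
          ≤ ((cA α * π + 1)/2 * |x - x'|) * |g t| := by
      filter_upwards [ae_restrict_mem measurableSet_uIoc] with y hy
      have hy' : y ∈ Icc (-π) π := uIoc_subset_uIcc hy |> hsub
      have hyabs : |y| ≤ π := abs_le.2 ⟨hy'.1, hy'.2⟩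
      rw [norm_mul, Real.norm_eq_abs, Real.norm_eq_abs]
      apply mul_le_mul_of_nonneg_right _ (abs_nonneg _)
      have eG : robinGreen α x y - robinGreen α x' y
          = -(1/2) * cA α * (x - x') * y + (-(1/2)) * (|x - y| - |x' - y|) := by
        simp only [robinGreen]; ring
      rw [eG]
      have t1 : |(-(1/2) : ℝ) * cA α * (x - x') * y| ≤ 1/2 * cA α * |x - x'| * π := by
        have hc := cA_pos hα
        rw [abs_mul, abs_mul, abs_mul, abs_of_nonneg hc.le,
          show |(-(1/2):ℝ)| = 1/2 by norm_num]
        exact mul_le_mul_of_nonneg_left hyabs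
          (mul_nonneg (mul_nonneg (by norm_num) hc.le) (abs_nonneg _))
      have t2 : |(-(1/2) : ℝ) * (|x - y| - |x' - y|)| ≤ 1/2 * |x - x'| := by
        rw [abs_mul]
        have := abs_abs_sub_abs_le_abs_sub (x - y) (x' - y)
        have e2 : x - y - (x' - y) = x - x' := by ring
        rw [e2] at this
        calc |(-(1/2):ℝ)| * |(|x - y| - |x' - y|)| = 1/2 * |(|x - y| - |x' - y|)| := by
              norm_num
          _ ≤ 1/2 * |x - x'| := by linarith
      calc |(-(1/2) * cA α * (x - x') * y + (-(1/2)) * (|x - y| - |x' - y|))|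
          ≤ |(-(1/2) * cA α * (x - x')) * y| + |(-(1/2)) * (|x - y| - |x' - y|)| := by
            rw [show (-(1/2) * cA α * (x - x')) * y = -(1/2) * cA α * (x - x') * y by ring]
            exact abs_add_le _ _
        _ ≤ 1/2 * cA α * |x - x'| * π + 1/2 * |x - x'| := by
            rw [show (-(1/2) * cA α * (x - x')) * y = -(1/2) * cA α * (x - x') * y by ring]
            exact add_le_add t1 t2
        _ = (cA α * π + 1)/2 * |x - x'| := by ring
    calc |robinSol α g x - robinSol α g x'|
        ≤ abs (∫ y in (-π)..π, ((cA α * π + 1)/2 * |x - x'|) * |g y|) := by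
          rw [e, ← Real.norm_eq_abs (∫ y in (-π)..π, (robinGreen α x y - robinGreen α x' y) * g y)]
          exact norm_integral_le_abs_of_norm_le hbd hbI
      _ = (cA α * π + 1)/2 * |x - x'| * I := by
          rw [intervalIntegral.integral_const_mul, abs_of_nonneg]
          exact mul_nonneg (mul_nonneg (by nlinarith [cA_pos hα, pi_pos] : (0:ℝ) ≤ (cA α * π + 1)/2) (abs_nonneg _)) hI0
      _ = L * |x - x'| := by rw [hL]; ring
  exact (LipschitzWith.of_dist_le_mul (K := L.toNNReal) (by
    intro x x'
    refine (key x x').trans (mul_le_mul_of_nonneg_right ?_ dist_nonneg)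
    rw [Real.coe_toNNReal _ hL0])).continuous

lemma main_pos (α : ℝ) (hα : 0 < α)
    (f : ℝ → ℝ) (hf : IntegrableOn f (Icc (-π) π))
    (hf0 : ∀ x ∈ Icc (-π) π, 0 ≤ f x)
    (b : ℝ) (hb : b ∈ Ioo 0 π)
    (φ : ℝ → ℝ) (hφconv : ConvexOn ℝ univ φ) (hφmono : Monotone φ) :
    ∫ x in (-π)..π, φ (robinSol α f x) ≤ ∫ x in (-π)..π, φ (robinSol α (polar b f) x) := by
  obtain ⟨hb1, hb2⟩ := hb
  have hπ := pi_pos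
  have hl1 : -π < 2*b-π := by linarith
  have hl2 : 2*b-π < b := by linarith
  set F := polar b f with hF
  have hfI : IntervalIntegrable f volume (-π) π := by
    rw [intervalIntegrable_iff_integrableOn_Icc_of_le (by linarith)]
    exact hf
  -- restriction helper
  have mono_help : ∀ {c d : ℝ}, -π ≤ c → c ≤ π → -π ≤ d → d ≤ π →
      IntervalIntegrable f volume c d := by
    intro c d h1 h2 h3 h4
    exact hfI.mono_set (by
      rw [uIcc_of_le (by linarith : (-π:ℝ) ≤ π)]
      exact uIcc_subset_Icc' (by linarith) ⟨h1, h2⟩ ⟨h3, h4⟩)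
  -- reflected f is interval integrable on [2b-π, π]
  have hfrI : IntervalIntegrable (fun y => f (2*b - y)) volume (2*b-π) π := by
    have h := (mono_help (by linarith) le_rfl (by linarith) (by linarith) :
      IntervalIntegrable f volume π (2*b-π)).comp_sub_left (2*b)
    rw [show 2*b - (2*b - π) = π by ring] at h
    exact h
  have hfr_mb : IntervalIntegrable (fun y => f (2*b - y)) volume (2*b-π) b :=
    hfrI.mono_set (by
      rw [uIcc_of_le (by linarith : (2*b-π:ℝ) ≤ π), uIcc_of_le (by linarith : (2*b-π:ℝ) ≤ b)]
      exact Icc_subset_Icc le_rfl (by linarith))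
  have hfr_bπ : IntervalIntegrable (fun y => f (2*b - y)) volume b π :=
    hfrI.mono_set (by
      rw [uIcc_of_le (by linarith : (2*b-π:ℝ) ≤ π), uIcc_of_le (by linarith : b ≤ π)]
      exact Icc_subset_Icc (by linarith) le_rfl)
  have hf_mb : IntervalIntegrable f volume (2*b-π) b :=
    mono_help (by linarith) (by linarith) (by linarith) (by linarith)
  have hf_bπ : IntervalIntegrable f volume b π :=
    mono_help (by linarith) (by linarith) (by linarith) (by linarith)
  have hf_ul : IntervalIntegrable f volume (-π) (2*b-π) :=
    mono_help le_rfl (by linarith) (by linarith) (by linarith)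
  -- max/min computations
  have maxid : ∀ u v : ℝ, max u v = ((u + v) + |v - u|)/2 := by
    intro u v
    rw [eq_div_iff (two_ne_zero)]
    have h1 := max_add_min u v
    have h2 := max_sub_min_eq_abs u v
    linarith
  have minid : ∀ u v : ℝ, min u v = ((u + v) - |v - u|)/2 := by
    intro u v
    rw [eq_div_iff (two_ne_zero)]
    have h1 := max_add_min u v
    have h2 := max_sub_min_eq_abs u v
    linarith
  have hmaxI : IntervalIntegrable (fun y => max (f y) (f (2*b-y))) volume (2*b-π) b := by
    have hcomb : IntervalIntegrable (fun y => ((f y + f (2*b-y)) + |f (2*b-y) - f y|)/2)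
        volume (2*b-π) b := ((hf_mb.add hfr_mb).add (hfr_mb.sub hf_mb).abs).div_const 2
    exact hcomb.congr_ae (Filter.Eventually.of_forall fun y => (maxid (f y) (f (2*b-y))).symm)
  have hminI : IntervalIntegrable (fun y => min (f y) (f (2*b-y))) volume (2*b-π) b := by
    have hcomb : IntervalIntegrable (fun y => ((f y + f (2*b-y)) - |f (2*b-y) - f y|)/2)
        volume (2*b-π) b := ((hf_mb.add hfr_mb).sub (hfr_mb.sub hf_mb).abs).div_const 2
    exact hcomb.congr_ae (Filter.Eventually.of_forall fun y => (minid (f y) (f (2*b-y))).symm)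
  have hminI' : IntervalIntegrable (fun y => min (f y) (f (2*b-y))) volume b π := by
    have hcomb : IntervalIntegrable (fun y => ((f y + f (2*b-y)) - |f (2*b-y) - f y|)/2)
        volume b π := ((hf_bπ.add hfr_bπ).sub (hfr_bπ.sub hf_bπ).abs).div_const 2
    exact hcomb.congr_ae (Filter.Eventually.of_forall fun y => (minid (f y) (f (2*b-y))).symm)
  -- integrability of F on the three pieces
  have hF1 : IntervalIntegrable F volume (-π) (2*b-π) := by
    refine hf_ul.congr_ae ?_
    have hne : ∀ᵐ y ∂(volume.restrict (uIoc (-π) (2*b-π))), y ≠ 2*b-π := by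
      refine ae_restrict_of_ae ?_
      rw [ae_iff]
      simp only [ne_eq, not_not]
      rw [show {a : ℝ | a = 2*b-π} = {(2*b-π : ℝ)} from setOf_eq_eq_singleton]
      exact measure_singleton _
    filter_upwards [hne, ae_restrict_mem measurableSet_uIoc] with y hy1 hy2
    rw [uIoc_of_le (by linarith : (-π:ℝ) ≤ 2*b-π)] at hy2
    have hylt : y < 2*b-π := lt_of_le_of_ne hy2.2 hy1
    show f y = F y
    rw [hF]
    simp only [polar, if_pos hb1]
    rw [if_pos hylt]
  have hF2 : IntervalIntegrable F volume (2*b-π) b := by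
    refine hmaxI.congr_ae ?_
    filter_upwards [ae_restrict_mem measurableSet_uIoc] with y hy
    rw [uIoc_of_le (by linarith : (2*b-π:ℝ) ≤ b)] at hy
    show max (f y) (f (2*b-y)) = F y
    rw [hF]
    simp only [polar, if_pos hb1]
    rw [if_neg (by linarith [hy.1] : ¬ y < 2*b-π), if_pos hy.2]
  have hF3 : IntervalIntegrable F volume b π := by
    refine hminI'.congr_ae ?_
    filter_upwards [ae_restrict_mem measurableSet_uIoc] with y hy
    rw [uIoc_of_le (by linarith : b ≤ π)] at hy
    show min (f y) (f (2*b-y)) = F y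
    rw [hF]
    simp only [polar, if_pos hb1]
    rw [if_neg (by linarith [hy.1] : ¬ y < 2*b-π), if_neg (by linarith [hy.1] : ¬ y ≤ b)]
  have hFI : IntervalIntegrable F volume (-π) π := (hF1.trans hF2).trans hF3
  -- splitting and flipping of integrals
  have split : ∀ g : ℝ → ℝ, IntervalIntegrable g volume (-π) (2*b-π) →
      IntervalIntegrable g volume (2*b-π) b → IntervalIntegrable g volume b π →
      (∫ y in (-π)..π, g y) = (∫ y in (-π)..(2*b-π), g y)
        + ((∫ y in (2*b-π)..b, g y) + ∫ y in b..π, g y) := by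
    intro g h1 h2 h3
    rw [← integral_add_adjacent_intervals h1 (h2.trans h3),
      ← integral_add_adjacent_intervals h2 h3]
  have flip : ∀ g : ℝ → ℝ, (∫ y in b..π, g y) = ∫ y in (2*b-π)..b, g (2*b-y) := by
    intro g
    have h := integral_comp_sub_left (a := 2*b-π) (b := b) g (2*b)
    rw [show 2*b - b = b by ring, show 2*b-(2*b-π) = π by ring] at h
    exact h.symm
  -- continuity of the kernels
  have kcont : ∀ x : ℝ, Continuous fun y => robinGreen α x y := green_cont α
  have kcont' : ∀ x : ℝ, Continuous fun y => robinGreen α x (2*b-y) := by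
    intro x
    exact (green_cont α x).comp (continuous_const.sub continuous_id)
  -- representation of robinSol α f
  have repf : ∀ x : ℝ, robinSol α f x = (∫ y in (-π)..(2*b-π), robinGreen α x y * f y)
      + ((∫ y in (2*b-π)..b, robinGreen α x y * f y)
        + ∫ y in (2*b-π)..b, robinGreen α x (2*b-y) * f (2*b-y)) := by
    intro x
    rw [robinSol, split _ (contMulII (kcont x) hf_ul) (contMulII (kcont x) hf_mb)
      (contMulII (kcont x) hf_bπ), flip (fun y => robinGreen α x y * f y)]
  -- representation of robinSol α F
  have repF : ∀ x : ℝ, robinSol α F x = (∫ y in (-π)..(2*b-π), robinGreen α x y * f y)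
      + ((∫ y in (2*b-π)..b, robinGreen α x y * max (f y) (f (2*b-y)))
        + ∫ y in (2*b-π)..b, robinGreen α x (2*b-y) * min (f y) (f (2*b-y))) := by
    intro x
    rw [robinSol, split _ (contMulII (kcont x) hF1) (contMulII (kcont x) hF2)
      (contMulII (kcont x) hF3), flip (fun y => robinGreen α x y * F y)]
    congr 1
    · apply intervalIntegral.integral_congr_ae
      have hne : ∀ᵐ (y : ℝ), y ≠ 2*b-π := by
        rw [ae_iff]
        simp only [ne_eq, not_not]
        rw [show {a : ℝ | a = 2*b-π} = {(2*b-π : ℝ)} from setOf_eq_eq_singleton]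
        exact measure_singleton _
      filter_upwards [hne] with y hy1 hy2
      rw [uIoc_of_le (by linarith : (-π:ℝ) ≤ 2*b-π)] at hy2
      have hylt : y < 2*b-π := lt_of_le_of_ne hy2.2 hy1
      rw [hF]
      simp only [polar, if_pos hb1]
      rw [if_pos hylt]
    congr 1
    · apply integral_congr
      intro y hy
      rw [uIcc_of_le (by linarith : (2*b-π:ℝ) ≤ b)] at hy
      show robinGreen α x y * F y = _
      rw [hF]
      simp only [polar, if_pos hb1]
      rw [if_neg (by linarith [hy.1] : ¬ y < 2*b-π), if_pos hy.2]
    · apply integral_congr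
      intro y hy
      rw [uIcc_of_le (by linarith : (2*b-π:ℝ) ≤ b)] at hy
      show robinGreen α x (2*b-y) * F (2*b-y) = _
      rcases eq_or_lt_of_le hy.2 with heq | hlt
      · rw [hF, heq, show 2*b-b = b by ring]
        simp only [polar, if_pos hb1]
        rw [if_neg (by linarith : ¬ b < 2*b-π), if_pos le_rfl,
          show 2*b-b = b by ring, max_self, min_self]
      · rw [hF]
        simp only [polar, if_pos hb1]
        rw [if_neg (by linarith [hy.1] : ¬ 2*b-y < 2*b-π),
          if_neg (by linarith : ¬ 2*b-y ≤ b), show 2*b-(2*b-y) = y by ring,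
          min_comm (f (2*b-y)) (f y)]
  -- the three pointwise inequalities for the solutions
  have ineq1 : ∀ x ∈ Icc (-π) b, robinSol α f x ≤ robinSol α F x := by
    intro x hx
    rw [repf x, repF x]
    refine add_le_add_right ?_ _
    rw [← integral_add (contMulII (kcont x) hf_mb) (contMulII (kcont' x) hfr_mb),
      ← integral_add (contMulII (kcont x) hmaxI) (contMulII (kcont' x) hminI)]
    refine integral_mono_on (by linarith)
      ((contMulII (kcont x) hf_mb).add (contMulII (kcont' x) hfr_mb))
      ((contMulII (kcont x) hmaxI).add (contMulII (kcont' x) hminI)) ?_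
    intro y hy
    exact point1 hα hb1 hb2 hx ⟨hy.1, hy.2⟩
      (hf0 y ⟨by linarith [hy.1], by linarith [hy.2]⟩)
      (hf0 (2*b-y) ⟨by linarith [hy.2], by linarith [hy.1]⟩)
  have ineq2 : ∀ x ∈ Icc (2*b-π) b, robinSol α f (2*b-x) ≤ robinSol α F x := by
    intro x hx
    rw [repf (2*b-x), repF x]
    refine add_le_add ?_ ?_
    · refine integral_mono_on (by linarith)
        (contMulII (kcont (2*b-x)) hf_ul) (contMulII (kcont x) hf_ul) ?_
      intro y hy
      refine mul_le_mul_of_nonneg_right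
        (green_mono hα hb1 hb2 hx ⟨hy.1, by linarith [hy.2]⟩)
        (hf0 y ⟨hy.1, by linarith [hy.2]⟩)
    · rw [← integral_add (contMulII (kcont (2*b-x)) hf_mb)
          (contMulII (kcont' (2*b-x)) hfr_mb),
        ← integral_add (contMulII (kcont x) hmaxI) (contMulII (kcont' x) hminI)]
      refine integral_mono_on (by linarith)
        ((contMulII (kcont (2*b-x)) hf_mb).add (contMulII (kcont' (2*b-x)) hfr_mb))
        ((contMulII (kcont x) hmaxI).add (contMulII (kcont' x) hminI)) ?_
      intro y hy
      exact point2 hα hb1 hb2 hx ⟨hy.1, hy.2⟩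
        (hf0 y ⟨by linarith [hy.1], by linarith [hy.2]⟩)
        (hf0 (2*b-y) ⟨by linarith [hy.2], by linarith [hy.1]⟩)
  have ineq3 : ∀ x ∈ Icc (2*b-π) b,
      robinSol α f x + robinSol α f (2*b-x) ≤ robinSol α F x + robinSol α F (2*b-x) := by
    intro x hx
    rw [repf x, repf (2*b-x), repF x, repF (2*b-x)]
    have key : (∫ y in (2*b-π)..b, (robinGreen α x y * f y
          + robinGreen α x (2*b-y) * f (2*b-y)
          + robinGreen α (2*b-x) y * f y
          + robinGreen α (2*b-x) (2*b-y) * f (2*b-y)))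
        ≤ ∫ y in (2*b-π)..b, (robinGreen α x y * max (f y) (f (2*b-y))
          + robinGreen α x (2*b-y) * min (f y) (f (2*b-y))
          + robinGreen α (2*b-x) y * max (f y) (f (2*b-y))
          + robinGreen α (2*b-x) (2*b-y) * min (f y) (f (2*b-y))) := by
      refine integral_mono_on (by linarith)
        ((((contMulII (kcont x) hf_mb).add (contMulII (kcont' x) hfr_mb)).add
          (contMulII (kcont (2*b-x)) hf_mb)).add (contMulII (kcont' (2*b-x)) hfr_mb))
        ((((contMulII (kcont x) hmaxI).add (contMulII (kcont' x) hminI)).add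
          (contMulII (kcont (2*b-x)) hmaxI)).add (contMulII (kcont' (2*b-x)) hminI)) ?_
      intro y hy
      exact point3 hα hb1 ⟨hy.1, hy.2⟩
        (hf0 y ⟨by linarith [hy.1], by linarith [hy.2]⟩)
        (hf0 (2*b-y) ⟨by linarith [hy.2], by linarith [hy.1]⟩)
    rw [integral_add ((((contMulII (kcont x) hf_mb).add (contMulII (kcont' x) hfr_mb)).add
          (contMulII (kcont (2*b-x)) hf_mb))) (contMulII (kcont' (2*b-x)) hfr_mb),
      integral_add (((contMulII (kcont x) hf_mb).add (contMulII (kcont' x) hfr_mb)))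
        (contMulII (kcont (2*b-x)) hf_mb),
      integral_add ((contMulII (kcont x) hf_mb)) (contMulII (kcont' x) hfr_mb),
      integral_add ((((contMulII (kcont x) hmaxI).add (contMulII (kcont' x) hminI)).add
          (contMulII (kcont (2*b-x)) hmaxI))) (contMulII (kcont' (2*b-x)) hminI),
      integral_add (((contMulII (kcont x) hmaxI).add (contMulII (kcont' x) hminI)))
        (contMulII (kcont (2*b-x)) hmaxI),
      integral_add ((contMulII (kcont x) hmaxI)) (contMulII (kcont' x) hminI)] at key
    linarith
  -- continuity of solutions and outer integrand
  have hφ : Continuous φ := by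
    exact continuousOn_univ.mp (hφconv.continuousOn isOpen_univ)
  have huf : Continuous (robinSol α f) := robinSol_continuous hα hfI
  have huF : Continuous (robinSol α F) := robinSol_continuous hα hFI
  have cf : Continuous fun x => φ (robinSol α f x) := hφ.comp huf
  have cF : Continuous fun x => φ (robinSol α F x) := hφ.comp huF
  rw [split _ (cf.intervalIntegrable _ _) (cf.intervalIntegrable _ _)
      (cf.intervalIntegrable _ _),
    split _ (cF.intervalIntegrable _ _) (cF.intervalIntegrable _ _)
      (cF.intervalIntegrable _ _),
    flip (fun x => φ (robinSol α f x)), flip (fun x => φ (robinSol α F x))]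
  refine add_le_add ?_ ?_
  · refine integral_mono_on (by linarith) (cf.intervalIntegrable _ _)
      (cF.intervalIntegrable _ _) ?_
    intro x hx
    exact hφmono (ineq1 x ⟨hx.1, by linarith [hx.2]⟩)
  · have cf2 : Continuous fun x => φ (robinSol α f (2*b-x)) :=
      cf.comp (continuous_const.sub continuous_id)
    have cF2 : Continuous fun x => φ (robinSol α F (2*b-x)) :=
      cF.comp (continuous_const.sub continuous_id)
    rw [← integral_add (cf.intervalIntegrable _ _) (cf2.intervalIntegrable _ _),
      ← integral_add (cF.intervalIntegrable _ _) (cF2.intervalIntegrable _ _)]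
    refine integral_mono_on (by linarith)
      ((cf.add cf2).intervalIntegrable _ _) ((cF.add cF2).intervalIntegrable _ _) ?_
    intro x hx
    exact two_point hφconv hφmono (ineq1 x ⟨by linarith [hx.1], hx.2⟩)
      (ineq2 x hx) (ineq3 x hx)

lemma polar_neg_eq {b : ℝ} (hb1 : -π < b) (hb2 : b < 0) (f : ℝ → ℝ) (y : ℝ) :
    polar b f y = polar (-b) (fun z => f (-z)) (-y) := by
  have hπ := pi_pos
  simp only [polar, if_neg (by linarith : ¬ (0:ℝ) < b), if_pos (by linarith : (0:ℝ) < -b),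
    neg_neg]
  rw [show -(2*(-b) - -y) = 2*b - y by ring]
  split_ifs <;>
    first
    | rfl
    | (exfalso; linarith)
    | (rw [show 2*b - y = y by linarith, max_self, min_self])

lemma robinSol_neg (α : ℝ) (g : ℝ → ℝ) (x : ℝ) :
    robinSol α (fun z => g (-z)) (-x) = robinSol α g x := by
  rw [robinSol, robinSol]
  have h := integral_comp_neg (a := -π) (b := π) (fun t => robinGreen α x t * g t)
  rw [neg_neg] at h
  rw [← h]
  apply integral_congr
  intro y _
  show robinGreen α (-x) y * g (-y) = robinGreen α x (-y) * g (-y)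
  have hg := green_neg α x (-y)
  rw [neg_neg] at hg
  rw [hg]

/-- **Polarization and convex integral means.** -/
theorem polarization_convex_integral_means
    (α : ℝ) (hα : 0 < α)
    (f : ℝ → ℝ) (hf : IntegrableOn f (Icc (-π) π))
    (hf0 : ∀ x ∈ Icc (-π) π, 0 ≤ f x)
    (b : ℝ) (hb : b ∈ Ioo (-π) 0 ∪ Ioo 0 π)
    (φ : ℝ → ℝ) (hφconv : ConvexOn ℝ univ φ) (hφmono : Monotone φ) :
    ∫ x in (-π)..π, φ (robinSol α f x) ≤ ∫ x in (-π)..π, φ (robinSol α (polar b f) x) := by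
  have hπ := pi_pos
  rcases hb with hbneg | hbpos
  · obtain ⟨hb1, hb2⟩ := hbneg
    have hfI : IntervalIntegrable f volume (-π) π := by
      rw [intervalIntegrable_iff_integrableOn_Icc_of_le (by linarith)]
      exact hf
    have hgI' : IntervalIntegrable (fun z => f (-z)) volume (-π) π := by
      have h := ((IntervalIntegrable.iff_comp_neg (f := f) (a := -π) (b := π) (by simp)).mp hfI).symm
      rwa [neg_neg] at h
    have hgI : IntegrableOn (fun z => f (-z)) (Icc (-π) π) := by
      rw [← intervalIntegrable_iff_integrableOn_Icc_of_le (by linarith)]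
      exact hgI'
    have hg0 : ∀ x ∈ Icc (-π) π, 0 ≤ f (-x) := fun x hx =>
      hf0 (-x) ⟨by linarith [hx.2], by linarith [hx.1]⟩
    have main := main_pos α hα (fun z => f (-z)) hgI hg0 (-b)
      ⟨by linarith, by linarith⟩ φ hφconv hφmono
    have e1 : ∫ x in (-π)..π, φ (robinSol α f x)
        = ∫ x in (-π)..π, φ (robinSol α (fun z => f (-z)) x) := by
      have h := integral_comp_neg (a := -π) (b := π)
        (fun x => φ (robinSol α (fun z => f (-z)) x))
      rw [neg_neg] at h
      rw [← h]
      apply integral_congr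
      intro x _
      show φ (robinSol α f x) = φ (robinSol α (fun z => f (-z)) (-x))
      rw [robinSol_neg α f x]
    have e2 : ∫ x in (-π)..π, φ (robinSol α (polar b f) x)
        = ∫ x in (-π)..π, φ (robinSol α (polar (-b) (fun z => f (-z))) x) := by
      have hpe : (fun z => (polar b f) (-z)) = polar (-b) (fun z => f (-z)) := by
        funext z
        have h := polar_neg_eq hb1 hb2 f (-z)
        rwa [neg_neg] at h
      have h := integral_comp_neg (a := -π) (b := π)
        (fun x => φ (robinSol α (polar (-b) (fun z => f (-z))) x))
      rw [neg_neg] at h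
      rw [← h]
      apply integral_congr
      intro x _
      show φ (robinSol α (polar b f) x) = φ (robinSol α (polar (-b) (fun z => f (-z))) (-x))
      rw [← hpe, robinSol_neg α (polar b f) x]
    rw [e1, e2]
    exact main
  · exact main_pos α hα f hf hf0 b hbpos φ hφconv hφmono
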